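/- Let D, w, W, W^{1/2}, L, L⁺, Π be as in the context, let ε ≥ 0, and let S : Fin m → ℝ satisfy S f ≥ 0 for all f, with S̄ the m × m diagonal matrix with diagonal entries S. If the ℓ²-operator norm of Π * S̄ * Π − Π is at most ε, then (1−ε)·L ⪯ Dᵀ * W^{1/2} * S̄ * W^{1/2} * D ⪯ (1+ε)·L (i.e. the up Laplacian with reweighted weights f ↦ w f · S f is sandwiched between (1−ε)·L and (1+ε)·L in the positive-semidefinite order). -/

import Mathlib

open Matrix

/-- Cauchy–Schwarz with square roots. -/
lemma cs_abs {m : ℕ} (f g : Fin m → ℝ) :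
    |∑ i, f i * g i| ≤ Real.sqrt (∑ i, f i ^ 2) * Real.sqrt (∑ i, g i ^ 2) := by
  have h := Finset.sum_mul_sq_le_sq_mul_sq Finset.univ f g
  have : |∑ i, f i * g i| = Real.sqrt ((∑ i, f i * g i) ^ 2) := by
    rw [Real.sqrt_sq_eq_abs]
  rw [this, ← Real.sqrt_mul (by positivity)]
  exact Real.sqrt_le_sqrt h

/-- Real matrices: `Mᵀ * M = 0 → M = 0`. -/
lemma tmul_self_eq_zero {k l : ℕ} {M : Matrix (Fin k) (Fin l) ℝ}
    (h : Mᵀ * M = 0) : M = 0 := by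
  ext i j
  have h2 := congrFun (congrFun h j) j
  simp only [Matrix.mul_apply, Matrix.transpose_apply, Matrix.zero_apply] at h2
  have hnn : ∀ a ∈ Finset.univ, (0:ℝ) ≤ M a j * M a j := fun a _ => mul_self_nonneg _
  have h3 := (Finset.sum_eq_zero_iff_of_nonneg hnn).mp h2 i (Finset.mem_univ i)
  simpa [mul_self_eq_zero] using h3

theorem sandwich_of_projection_perturbation (m n : ℕ) (hn : 1 ≤ n)
    (D : Matrix (Fin m) (Fin n) ℝ) (w : Fin m → ℝ) (hw : ∀ f, 0 < w f)
    (W Whalf : Matrix (Fin m) (Fin m) ℝ)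
    (hW : W = Matrix.diagonal w)
    (hWhalf : Whalf = Matrix.diagonal fun f => Real.sqrt (w f))
    (L Lp : Matrix (Fin n) (Fin n) ℝ) (hL : L = Dᵀ * W * D)
    (h1 : L * Lp * L = L) (h2 : Lp * L * Lp = Lp)
    (h3 : (L * Lp)ᵀ = L * Lp) (h4 : (Lp * L)ᵀ = Lp * L)
    (Pm : Matrix (Fin m) (Fin m) ℝ) (hPm : Pm = Whalf * D * Lp * Dᵀ * Whalf)
    (ε : ℝ) (hε : 0 ≤ ε)
    (S : Fin m → ℝ) (hS : ∀ f, 0 ≤ S f)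
    -- the ℓ²-operator norm of `Π S̄ Π − Π` is at most `ε`:
    (hopnorm : ∀ x : Fin m → ℝ, Real.sqrt (∑ i, (x i) ^ 2) = 1 →
      Real.sqrt (∑ i, ((Pm * Matrix.diagonal S * Pm - Pm).mulVec x i) ^ 2) ≤ ε) :
    (Dᵀ * Whalf * Matrix.diagonal S * Whalf * D - (1 - ε) • L).PosSemidef ∧
      ((1 + ε) • L - Dᵀ * Whalf * Matrix.diagonal S * Whalf * D).PosSemidef := by
  have hWht : Whalfᵀ = Whalf := by rw [hWhalf, Matrix.diagonal_transpose]
  have hWhW : Whalf * Whalf = W := by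
    rw [hWhalf, hW, Matrix.diagonal_mul_diagonal,
      show (fun i => Real.sqrt (w i) * Real.sqrt (w i)) = w from
        funext fun f => Real.mul_self_sqrt (hw f).le]
  set B := Whalf * D with hB
  have hBt : Bᵀ = Dᵀ * Whalf := by rw [hB, Matrix.transpose_mul, hWht]
  have hBtB : Bᵀ * B = L := by
    rw [hBt, hB, hL, ← hWhW]; simp only [Matrix.mul_assoc]
  have hLsym : Lᵀ = L := by
    rw [← hBtB, Matrix.transpose_mul, Matrix.transpose_transpose]
  have hPmB : Pm = B * Lp * Bᵀ := by
    rw [hPm, hBt, hB]; simp only [Matrix.mul_assoc]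
  -- fact 1 : B * (Lp * L) = B
  have hLK1 : L * (Lp * L - 1) = 0 := by
    rw [Matrix.mul_sub, Matrix.mul_one, ← Matrix.mul_assoc, h1, sub_self]
  have fact1 : B * (Lp * L) = B := by
    have key : (B * (Lp * L - 1))ᵀ * (B * (Lp * L - 1)) = 0 := by
      calc (B * (Lp * L - 1))ᵀ * (B * (Lp * L - 1))
          = (Lp * L - 1)ᵀ * ((Bᵀ * B) * (Lp * L - 1)) := by
            rw [Matrix.transpose_mul]; simp only [Matrix.mul_assoc]
        _ = 0 := by rw [hBtB, hLK1, Matrix.mul_zero]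
    have h0 := tmul_self_eq_zero key
    rw [Matrix.mul_sub, Matrix.mul_one, sub_eq_zero] at h0
    exact h0
  -- fact 2 : B * (Lpᵀ * L) = B
  have hJL : (Lpᵀ * L - 1)ᵀ * L = 0 := by
    rw [Matrix.transpose_sub, Matrix.transpose_mul, Matrix.transpose_transpose, hLsym,
      Matrix.transpose_one, Matrix.sub_mul, Matrix.one_mul, h1, sub_self]
  have fact2 : B * (Lpᵀ * L) = B := by
    have key : (B * (Lpᵀ * L - 1))ᵀ * (B * (Lpᵀ * L - 1)) = 0 := by
      calc (B * (Lpᵀ * L - 1))ᵀ * (B * (Lpᵀ * L - 1))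
          = ((Lpᵀ * L - 1)ᵀ * (Bᵀ * B)) * (Lpᵀ * L - 1) := by
            rw [Matrix.transpose_mul]; simp only [Matrix.mul_assoc]
        _ = 0 := by rw [hBtB, hJL, Matrix.zero_mul]
    have h0 := tmul_self_eq_zero key
    rw [Matrix.mul_sub, Matrix.mul_one, sub_eq_zero] at h0
    exact h0
  -- Pm * B = B and Bᵀ * Pm = Bᵀ
  have hPmBB : Pm * B = B := by
    calc Pm * B = B * (Lp * (Bᵀ * B)) := by rw [hPmB]; simp only [Matrix.mul_assoc]
      _ = B := by rw [hBtB]; exact fact1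
  have hBtPm : Bᵀ * Pm = Bᵀ := by
    have := congrArg Matrix.transpose fact2
    rw [Matrix.transpose_mul, Matrix.transpose_mul, Matrix.transpose_transpose, hLsym] at this
    -- this : (L * Lp) * Bᵀ = Bᵀ
    calc Bᵀ * Pm = (Bᵀ * B) * (Lp * Bᵀ) := by rw [hPmB]; simp only [Matrix.mul_assoc]
      _ = (L * Lp) * Bᵀ := by rw [hBtB, Matrix.mul_assoc]
      _ = Bᵀ := this
  -- main matrix identity
  set Sd := Matrix.diagonal S with hSd
  set M := Pm * Sd * Pm - Pm with hM
  have hMain : Bᵀ * M * B = Bᵀ * Sd * B - L := by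
    have e1 : M * B = Pm * Sd * B - B := by
      rw [hM, Matrix.sub_mul, Matrix.mul_assoc (Pm * Sd), hPmBB]
    calc Bᵀ * M * B = Bᵀ * (M * B) := by rw [Matrix.mul_assoc]
      _ = Bᵀ * (Pm * Sd * B) - Bᵀ * B := by rw [e1, Matrix.mul_sub]
      _ = ((Bᵀ * Pm) * Sd) * B - L := by rw [hBtB]; simp only [Matrix.mul_assoc]
      _ = Bᵀ * Sd * B - L := by rw [hBtPm]
  -- operator norm bound for all vectors
  have hMy : ∀ y : Fin m → ℝ,
      Real.sqrt (∑ i, (M.mulVec y i) ^ 2) ≤ ε * Real.sqrt (∑ i, (y i) ^ 2) := by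
    intro y
    by_cases hy : y = 0
    · simp [hy, Matrix.mulVec_zero]
    · have hsum : 0 < ∑ i, (y i) ^ 2 := by
        rcases Function.ne_iff.mp hy with ⟨i, hi⟩
        have : (0:ℝ) < (y i)^2 := lt_of_le_of_ne (sq_nonneg _) (Ne.symm (pow_ne_zero 2 hi))
        exact Finset.sum_pos' (fun j _ => sq_nonneg _) ⟨i, Finset.mem_univ i, this⟩
      have hc : 0 < Real.sqrt (∑ i, (y i) ^ 2) := Real.sqrt_pos.mpr hsum
      set c := Real.sqrt (∑ i, (y i) ^ 2) with hcdef
      have hunit : Real.sqrt (∑ i, ((c⁻¹ • y) i) ^ 2) = 1 := by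
        have : ∑ i, ((c⁻¹ • y) i) ^ 2 = c⁻¹ ^ 2 * ∑ i, (y i) ^ 2 := by
          rw [Finset.mul_sum]; congr 1; funext i; simp [Pi.smul_apply, mul_pow]
        rw [this, Real.sqrt_mul (by positivity), Real.sqrt_sq (by positivity), ← hcdef]
        field_simp
      have hbound := hopnorm (c⁻¹ • y) hunit
      have hmv : M.mulVec (c⁻¹ • y) = c⁻¹ • M.mulVec y := Matrix.mulVec_smul M c⁻¹ y
      rw [hmv] at hbound
      have hscale : Real.sqrt (∑ i, ((c⁻¹ • M.mulVec y) i) ^ 2)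
          = c⁻¹ * Real.sqrt (∑ i, (M.mulVec y i) ^ 2) := by
        have : ∑ i, ((c⁻¹ • M.mulVec y) i) ^ 2 = c⁻¹ ^ 2 * ∑ i, (M.mulVec y i) ^ 2 := by
          rw [Finset.mul_sum]; congr 1; funext i; simp [Pi.smul_apply, mul_pow]
        rw [this, Real.sqrt_mul (by positivity), Real.sqrt_sq (by positivity)]
      rw [hscale] at hbound
      calc Real.sqrt (∑ i, (M.mulVec y i) ^ 2)
          = c * (c⁻¹ * Real.sqrt (∑ i, (M.mulVec y i) ^ 2)) := by field_simp
        _ ≤ c * ε := by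
            exact mul_le_mul_of_nonneg_left hbound hc.le
        _ = ε * c := mul_comm _ _
  -- key scalar inequality
  have key : ∀ x : Fin n → ℝ,
      |x ⬝ᵥ (Bᵀ * Sd * B).mulVec x - x ⬝ᵥ L.mulVec x| ≤ ε * (x ⬝ᵥ L.mulVec x) := by
    intro x
    set y := B.mulVec x with hy
    have hql : x ⬝ᵥ L.mulVec x = ∑ i, (y i) ^ 2 := by
      rw [← hBtB, ← Matrix.mulVec_mulVec, Matrix.dotProduct_mulVec, Matrix.vecMul_transpose]
      simp [dotProduct, sq, hy]
    have hqd : x ⬝ᵥ (Bᵀ * Sd * B).mulVec x - x ⬝ᵥ L.mulVec x = y ⬝ᵥ M.mulVec y := by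
      have : x ⬝ᵥ (Bᵀ * M * B).mulVec x = y ⬝ᵥ M.mulVec y := by
        rw [← Matrix.mulVec_mulVec, ← Matrix.mulVec_mulVec, Matrix.dotProduct_mulVec,
          Matrix.vecMul_transpose]
      rw [← this, hMain, Matrix.sub_mulVec, dotProduct_sub]
    rw [hqd, hql]
    have hcs := cs_abs y (M.mulVec y)
    have : y ⬝ᵥ M.mulVec y = ∑ i, y i * M.mulVec y i := rfl
    rw [this]
    calc |∑ i, y i * M.mulVec y i|
        ≤ Real.sqrt (∑ i, (y i) ^ 2) * Real.sqrt (∑ i, (M.mulVec y i) ^ 2) := hcs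
      _ ≤ Real.sqrt (∑ i, (y i) ^ 2) * (ε * Real.sqrt (∑ i, (y i) ^ 2)) := by
          exact mul_le_mul_of_nonneg_left (hMy y) (Real.sqrt_nonneg _)
      _ = ε * (Real.sqrt (∑ i, (y i) ^ 2) * Real.sqrt (∑ i, (y i) ^ 2)) := by ring
      _ = ε * ∑ i, (y i) ^ 2 := by rw [Real.mul_self_sqrt (by positivity)]
  -- identify the target matrix with Bᵀ * Sd * B
  have hA : Dᵀ * Whalf * Matrix.diagonal S * Whalf * D = Bᵀ * Sd * B := by
    rw [hBt, hB, hSd]; simp only [Matrix.mul_assoc]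
  -- Hermitian facts
  have hAH : (Bᵀ * Sd * B).IsHermitian := by
    have : (Bᵀ * Sd * B)ᵀ = Bᵀ * Sd * B := by
      simp [hSd, Matrix.transpose_mul, Matrix.transpose_transpose, Matrix.diagonal_transpose,
        Matrix.mul_assoc]
    simpa [Matrix.IsHermitian, Matrix.conjTranspose_eq_transpose_of_trivial] using this
  have hLH : L.IsHermitian := by
    simpa [Matrix.IsHermitian, Matrix.conjTranspose_eq_transpose_of_trivial] using hLsym
  have hLnn : ∀ x : Fin n → ℝ, 0 ≤ x ⬝ᵥ L.mulVec x := by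
    intro x
    have hql : x ⬝ᵥ L.mulVec x = ∑ i, (B.mulVec x i) ^ 2 := by
      rw [← hBtB, ← Matrix.mulVec_mulVec, Matrix.dotProduct_mulVec, Matrix.vecMul_transpose]
      simp [dotProduct, sq]
    rw [hql]; positivity
  rw [hA]
  have hsmulH : ∀ c : ℝ, (c • L).IsHermitian := by
    intro c
    simpa [Matrix.IsHermitian, Matrix.conjTranspose_eq_transpose_of_trivial,
      Matrix.transpose_smul] using congrArg (c • ·) hLsym
  constructor
  · refine Matrix.PosSemidef.of_dotProduct_mulVec_nonneg (hAH.sub (hsmulH (1 - ε))) fun x => ?_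
    have hk := key x
    rw [star_trivial x, Matrix.sub_mulVec, dotProduct_sub, Matrix.smul_mulVec,
      dotProduct_smul]
    have := (abs_le.mp hk).1
    have hl := hLnn x
    rw [smul_eq_mul]
    nlinarith [mul_nonneg hε hl]
  · refine Matrix.PosSemidef.of_dotProduct_mulVec_nonneg ((hsmulH (1 + ε)).sub hAH) fun x => ?_
    have hk := key x
    rw [star_trivial x, Matrix.sub_mulVec, dotProduct_sub, Matrix.smul_mulVec,
      dotProduct_smul]
    have := (abs_le.mp hk).2
    have hl := hLnn x
    rw [smul_eq_mul]
    linarith
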